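/- If (A_n) is an increasing sequence of non-negative real numbers with A_{2n} ≥ n·A_n for all n ∈ ℕ, then ∑_{d|n} μ(n/d)·A_d ≥ 0 for all n ∈ ℕ. -/

import Mathlib

open ArithmeticFunction ArithmeticFunction.Moebius in
theorem moebius_sum_nonneg_of_growth (A : ℕ → ℝ) (hmono : Monotone A)
    (hnonneg : ∀ n, 0 ≤ A n) (hgrowth : ∀ n : ℕ, 0 < n → (n : ℝ) * A n ≤ A (2 * n)) :
    ∀ n : ℕ, 0 < n → 0 ≤ ∑ d ∈ n.divisors, (μ (n / d) : ℝ) * A d := by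
  intro n hn
  rcases eq_or_lt_of_le (Nat.one_le_iff_ne_zero.mpr hn.ne') with h1 | h1
  · simp [← h1]
    exact hnonneg 1
  -- n ≥ 2
  set p := n.minFac with hp
  have hpp : p.Prime := Nat.minFac_prime (by omega)
  have hpd : p ∣ n := Nat.minFac_dvd n
  set m := n / p with hm
  have hmn : p * m = n := Nat.mul_div_cancel' hpd
  have hm1 : 0 < m := Nat.div_pos (Nat.minFac_le hn) hpp.pos
  have h2m : 2 * m ≤ n := by
    have := hpp.two_le
    nlinarith
  -- every proper divisor is ≤ m
  have hdle : ∀ d ∈ n.divisors.erase n, d ≤ m := by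
    intro d hd
    have hdn : d ≠ n := (Finset.mem_erase.mp hd).1
    have hdvd : d ∣ n := (Nat.mem_divisors.mp (Finset.mem_of_mem_erase hd)).1
    obtain ⟨e, he⟩ := hdvd
    have hd0 : 0 < d := Nat.pos_of_dvd_of_pos ⟨e, he⟩ hn
    have he0 : e ≠ 0 := by rintro rfl; simp at he; omega
    have he1' : e ≠ 1 := by rintro rfl; simp at he; exact hdn he.symm
    have he1 : 2 ≤ e := by omega
    have hed : e ∣ n := ⟨d, by rw [he, Nat.mul_comm]⟩
    have hpe : p ≤ e := Nat.minFac_le_of_dvd he1 hed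
    calc d ≤ d * e / p := by
            rw [Nat.le_div_iff_mul_le hpp.pos]
            exact Nat.mul_le_mul_left d hpe
      _ = m := by rw [← he]
  -- card bound
  have hcard : (n.divisors.erase n).card ≤ m := by
    have hsub : n.divisors.erase n ⊆ Finset.Icc 1 m := by
      intro d hd
      have := hdle d hd
      have hd0 : 0 < d := Nat.pos_of_mem_divisors (Finset.mem_of_mem_erase hd)
      simp [Finset.mem_Icc]; omega
    calc (n.divisors.erase n).card ≤ (Finset.Icc 1 m).card := Finset.card_le_card hsub
      _ = m := by simp
  -- bound the sum over proper divisors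
  have hbound : -(m : ℝ) * A m ≤ ∑ d ∈ n.divisors.erase n, (μ (n / d) : ℝ) * A d := by
    have h1 : ∀ d ∈ n.divisors.erase n, -A m ≤ (μ (n / d) : ℝ) * A d := by
      intro d hd
      have hAd : A d ≤ A m := hmono (hdle d hd)
      have hmu : (-1 : ℝ) ≤ (μ (n / d) : ℝ) := by
        have := @ArithmeticFunction.abs_moebius_le_one (n / d)
        have := abs_le.mp this
        exact_mod_cast this.1
      calc -A m ≤ -A d := by linarith
        _ = -1 * A d := by ring
        _ ≤ (μ (n / d) : ℝ) * A d := mul_le_mul_of_nonneg_right hmu (hnonneg d)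
    calc -(m : ℝ) * A m ≤ -((n.divisors.erase n).card : ℝ) * A m := by
          have : ((n.divisors.erase n).card : ℝ) ≤ (m : ℝ) := by exact_mod_cast hcard
          nlinarith [hnonneg m]
      _ = ∑ _d ∈ n.divisors.erase n, (-A m) := by
          rw [Finset.sum_const, nsmul_eq_mul]; ring
      _ ≤ _ := Finset.sum_le_sum h1
  -- A n ≥ m * A m
  have hAn : (m : ℝ) * A m ≤ A n := by
    calc (m : ℝ) * A m ≤ A (2 * m) := hgrowth m hm1
      _ ≤ A n := hmono h2m
  -- put it together
  have hnn : n ∈ n.divisors := Nat.mem_divisors_self n hn.ne'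
  rw [← Finset.add_sum_erase _ _ hnn]
  have : (μ (n / n) : ℝ) = 1 := by
    rw [Nat.div_self hn]
    simp
  rw [this, one_mul]
  linarith
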